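/- Let p be prime and A = {a_1,...,a_d} ⊆ F_p*. Let G = (F_p, E_A) be the Cayley digraph with edges (x, x+a) for x ∈ F_p, a ∈ A. Then β(G), the minimum number of edges whose deletion makes G acyclic, satisfies β(G) ≤ h_p(a_1,...,a_d) = min_{k=1}^{p-1} Σ_{j=1}^d (k·a_j mod p). -/

import Mathlib

/-- A directed graph (given by its edge relation `E`) has a directed cycle. -/
def HasDirCycle {V : Type*} (E : V → V → Prop) : Prop :=
  ∃ (n : ℕ) (u : ℕ → V), 1 ≤ n ∧ (∀ j < n, E (u j) (u (j + 1))) ∧ u n = u 0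

/-- The edge set of the Cayley digraph of `A ⊆ ZMod p`: all pairs `(x, x + a)`
with `a ∈ A`. -/
def cayleyEdges (p : ℕ) [Fact p.Prime] (A : Finset (ZMod p)) :
    Finset (ZMod p × ZMod p) :=
  (Finset.univ ×ˢ A).image fun q => (q.1, q.1 + q.2)

/-- `β(G)`: minimum number of edges whose deletion makes the digraph acyclic. -/
noncomputable def betaCayley (p : ℕ) [Fact p.Prime] (A : Finset (ZMod p)) : ℕ :=
  sInf {n | ∃ X ⊆ cayleyEdges p A, X.card = n ∧
    ¬ HasDirCycle (fun x y => (x, y) ∈ cayleyEdges p A \ X)}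

lemma count_wrap_le (p : ℕ) [Fact p.Prime] (b : ZMod p) (hb : b ≠ 0) :
    (Finset.univ.filter fun x : ZMod p => ((x + b).val ≤ x.val)).card ≤ b.val := by
  haveI : NeZero p := ⟨(Fact.out : p.Prime).ne_zero⟩
  classical
  have hbpos : 0 < b.val := by
    rcases Nat.eq_zero_or_pos b.val with h | h
    · exact absurd ((ZMod.val_eq_zero b).mp h) hb
    · exact h
  have hblt := ZMod.val_lt b
  calc (Finset.univ.filter fun x : ZMod p => ((x + b).val ≤ x.val)).card
      ≤ (Finset.Ico (p - b.val) p).card := by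
        apply Finset.card_le_card_of_injOn ZMod.val
        · intro x hx
          simp only [Finset.mem_coe, Finset.mem_filter] at hx
          rw [Finset.mem_coe, Finset.mem_Ico]
          refine ⟨?_, ZMod.val_lt x⟩
          by_contra h
          push_neg at h
          have hx' : (x + b).val = x.val + b.val := by
            rw [ZMod.val_add]
            exact Nat.mod_eq_of_lt (by omega)
          omega
        · intro x _ y _ h
          exact ZMod.val_injective p h
    _ = b.val := by rw [Nat.card_Ico]; omega

lemma shift_injective (p : ℕ) [Fact p.Prime] :
    Function.Injective (fun q : ZMod p × ZMod p => (q.1, q.1 + q.2)) := by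
  intro a b h
  rcases a with ⟨a1, a2⟩
  rcases b with ⟨b1, b2⟩
  simp only [Prod.mk.injEq] at h ⊢
  obtain ⟨h1, h2⟩ := h
  subst h1
  exact ⟨rfl, add_left_cancel h2⟩

theorem stmt_17 (p : ℕ) [Fact p.Prime] (A : Finset (ZMod p))
    (hA : A.Nonempty) (h0 : ∀ a ∈ A, a ≠ 0) :
    betaCayley p A ≤
      sInf {n | ∃ k : ℕ, 1 ≤ k ∧ k ≤ p - 1 ∧
        n = ∑ a ∈ A, ((k : ZMod p) * a).val} := by
  classical
  have hp : p.Prime := Fact.out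
  have hp2 : 2 ≤ p := hp.two_le
  -- The RHS set is nonempty (take k = 1).
  have hSne : {n | ∃ k : ℕ, 1 ≤ k ∧ k ≤ p - 1 ∧
      n = ∑ a ∈ A, ((k : ZMod p) * a).val}.Nonempty :=
    ⟨∑ a ∈ A, ((1 : ZMod p) * a).val, 1, le_refl 1, by omega, by norm_num⟩
  obtain ⟨k, hk1, hk2, hkeq⟩ := Nat.sInf_mem hSne
  rw [hkeq]
  -- `k` is invertible mod `p`.
  have hkne : (k : ZMod p) ≠ 0 := by
    rw [Ne, ZMod.natCast_eq_zero_iff]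
    intro hdvd
    have := Nat.le_of_dvd (by omega) hdvd
    omega
  -- The set of edges to delete.
  set X : Finset (ZMod p × ZMod p) :=
    ((Finset.univ ×ˢ A).filter fun q : ZMod p × ZMod p =>
      ((k : ZMod p) * (q.1 + q.2)).val ≤ ((k : ZMod p) * q.1).val).image
      (fun q => (q.1, q.1 + q.2)) with hX
  have hsub : X ⊆ cayleyEdges p A :=
    Finset.image_subset_image (Finset.filter_subset _ _)
  -- Deleting X makes the graph acyclic.
  have hacyc : ¬ HasDirCycle (fun x y => (x, y) ∈ cayleyEdges p A \ X) := by
    rintro ⟨n, u, hn, hE, hcl⟩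
    have hstep : ∀ j < n,
        ((k : ZMod p) * u j).val < ((k : ZMod p) * u (j + 1)).val := by
      intro j hj
      have hej := hE j hj
      simp only [Finset.mem_sdiff] at hej
      obtain ⟨hmem, hnot⟩ := hej
      rw [cayleyEdges, Finset.mem_image] at hmem
      obtain ⟨q, hq, hq2⟩ := hmem
      rw [Finset.mem_product] at hq
      have hx : q.1 = u j := congrArg Prod.fst hq2
      have hy : u (j + 1) = q.1 + q.2 := (congrArg Prod.snd hq2).symm
      have hqnot : q ∉ (Finset.univ ×ˢ A).filter fun q : ZMod p × ZMod p =>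
          ((k : ZMod p) * (q.1 + q.2)).val ≤ ((k : ZMod p) * q.1).val := by
        intro hqmem
        apply hnot
        rw [hX]
        have : (q.1, q.1 + q.2) ∈ _ := Finset.mem_image_of_mem
          (fun q : ZMod p × ZMod p => (q.1, q.1 + q.2)) hqmem
        rwa [hq2] at this
      rw [Finset.mem_filter] at hqnot
      push_neg at hqnot
      have := hqnot (Finset.mem_product.mpr ⟨Finset.mem_univ _, hq.2⟩)
      rw [hy, ← hx]
      omega
    have hchain : ∀ m ≤ n,
        ((k : ZMod p) * u 0).val + m ≤ ((k : ZMod p) * u m).val := by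
      intro m
      induction m with
      | zero => intro _; omega
      | succ m ih =>
        intro hm
        have h1 := ih (by omega)
        have h2 := hstep m (by omega)
        omega
    have := hchain n le_rfl
    rw [hcl] at this
    omega
  -- Bound the number of deleted edges.
  have hcard : X.card ≤ ∑ a ∈ A, ((k : ZMod p) * a).val := by
    calc X.card ≤ ((Finset.univ ×ˢ A).filter fun q : ZMod p × ZMod p =>
          ((k : ZMod p) * (q.1 + q.2)).val ≤ ((k : ZMod p) * q.1).val).card :=
        Finset.card_image_le
      _ = ∑ a ∈ A, (Finset.univ.filter fun x : ZMod p =>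
            ((k : ZMod p) * (x + a)).val ≤ ((k : ZMod p) * x).val).card := by
          rw [Finset.card_filter]
          rw [Finset.sum_product_right]
          congr 1
          ext a
          rw [Finset.card_filter]
      _ ≤ ∑ a ∈ A, ((k : ZMod p) * a).val := by
          apply Finset.sum_le_sum
          intro a ha
          have hbne : (k : ZMod p) * a ≠ 0 :=
            mul_ne_zero hkne (h0 a ha)
          refine le_trans ?_ (count_wrap_le p ((k : ZMod p) * a) hbne)
          apply Finset.card_le_card_of_injOn (fun x => (k : ZMod p) * x)
          · intro x hx
            simp only [Finset.mem_coe, Finset.mem_filter, Finset.mem_univ, true_and] at hx ⊢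
            have hmul : (k : ZMod p) * x + (k : ZMod p) * a
                = (k : ZMod p) * (x + a) := by ring
            rw [hmul]
            exact hx
          · intro x _ y _ h
            exact mul_left_cancel₀ hkne h
  exact le_trans (Nat.sInf_le ⟨X, hsub, rfl, hacyc⟩) hcard
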